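/- Let x_1,...,x_n be independent real random variables with continuous CDFs F_1,...,F_n, empirical CDF F̂, and φ = max_i ‖F_i − F_n‖_∞. For any γ, δ ∈ (0,1) and ε ∈ (0,1), with probability at least 1 − δ: γ − F_n(Q⁻_γ(F̂)) ≤ φ + (1−ε)^{-1}[√(2γ(1−γ)log(1/δ)/n) + (2/3 + 1/(2ε))·log(1/δ)/n]. -/

import Mathlib

open MeasureTheory ProbabilityTheory

noncomputable def Qminus (γ : ℝ) (F : ℝ → ℝ) : ℝ := sInf {x | γ ≤ F x}

noncomputable def ecdf {n : ℕ} (x : Fin n → ℝ) (t : ℝ) : ℝ :=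
  ((Finset.univ.filter (fun i => x i ≤ t)).card : ℝ) / n

section Aux

open Real

/-- Generic derivative comparison on `[0, ∞)`. -/
lemma le_on_Ici' {f g : ℝ → ℝ} (hf : Differentiable ℝ f) (hg : Differentiable ℝ g)
    (h0 : f 0 ≤ g 0) (hd : ∀ y, 0 < y → deriv f y ≤ deriv g y) :
    ∀ y, 0 ≤ y → f y ≤ g y := by
  intro y hy
  have hmono : MonotoneOn (fun z => g z - f z) (Set.Ici (0:ℝ)) := by
    apply monotoneOn_of_deriv_nonneg (convex_Ici 0)
      ((hg.sub hf).continuous.continuousOn)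
      ((hg.sub hf).differentiableOn)
    intro z hz
    rw [interior_Ici] at hz
    rw [deriv_sub (hg z) (hf z)]
    linarith [hd z hz]
  have := hmono (Set.self_mem_Ici) (Set.mem_Ici.mpr hy) hy
  simp only at this
  linarith

lemma aux_k' : ∀ y : ℝ, 0 ≤ y → 0 ≤ 1 + (y - 1) * Real.exp y := by
  intro y _
  have h1 : (-y) + 1 ≤ Real.exp (-y) := Real.add_one_le_exp (-y)
  have h2 : (1 - y) * Real.exp y ≤ Real.exp (-y) * Real.exp y :=
    mul_le_mul_of_nonneg_right (by linarith) (Real.exp_pos y).le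
  rw [← Real.exp_add, neg_add_cancel, Real.exp_zero] at h2
  nlinarith

lemma hd1' (y : ℝ) : HasDerivAt (fun z : ℝ => (1 - z/3) * (Real.exp z - 1 - z))
    ((-(1/3)) * (Real.exp y - 1 - y) + (1 - y/3) * (Real.exp y - 1)) y := by
  have h1 : HasDerivAt (fun z : ℝ => 1 - z/3) (-(1/3)) y := by
    simpa using ((hasDerivAt_id y).div_const 3).const_sub 1
  have h2 : HasDerivAt (fun z : ℝ => Real.exp z - 1 - z) (Real.exp y - 1) y := by
    exact ((Real.hasDerivAt_exp y).sub_const 1).sub (hasDerivAt_id' y)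
  exact h1.mul h2

lemma hd2' (y : ℝ) : HasDerivAt
    (fun z : ℝ => (-(1/3)) * (Real.exp z - 1 - z) + (1 - z/3) * (Real.exp z - 1))
    ((-(1/3)) * (Real.exp y - 1) + ((-(1/3)) * (Real.exp y - 1) + (1 - y/3) * Real.exp y)) y := by
  have h2 : HasDerivAt (fun z : ℝ => Real.exp z - 1 - z) (Real.exp y - 1) y := by
    exact ((Real.hasDerivAt_exp y).sub_const 1).sub (hasDerivAt_id' y)
  have h1 : HasDerivAt (fun z : ℝ => 1 - z/3) (-(1/3)) y := by
    simpa using ((hasDerivAt_id y).div_const 3).const_sub 1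
  have h3 : HasDerivAt (fun z : ℝ => Real.exp z - 1) (Real.exp y) y := by
    simpa using (Real.hasDerivAt_exp y).sub_const 1
  exact (h2.const_mul (-(1/3))).add (h1.mul h3)

lemma step2' : ∀ y : ℝ, 0 ≤ y →
    (-(1/3)) * (Real.exp y - 1 - y) + (1 - y/3) * (Real.exp y - 1) ≤ y := by
  apply le_on_Ici'
  · exact fun y => ((hd2' y)).differentiableAt
  · exact differentiable_id
  · simp
  · intro y hy
    rw [(hd2' y).deriv, deriv_id'']
    have := aux_k' y hy.le
    nlinarith [Real.exp_pos y]

/-- `(1 - y/3)(e^y - 1 - y) ≤ y²/2` for `y ≥ 0`. -/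
lemma exp_taylor_bound : ∀ y : ℝ, 0 ≤ y →
    (1 - y/3) * (Real.exp y - 1 - y) ≤ y^2/2 := by
  apply le_on_Ici'
  · exact fun y => (hd1' y).differentiableAt
  · exact Differentiable.div_const (differentiable_pow 2) 2
  · simp
  · intro y hy
    rw [(hd1' y).deriv]
    have : deriv (fun z : ℝ => z^2/2) y = y := by
      rw [deriv_div_const, deriv_pow_field]; norm_num
    rw [this]
    exact step2' y hy.le

lemma hdA' (p : ℝ) (l : ℝ) :
    HasDerivAt (fun z : ℝ => (1-p) * Real.exp (z * (-p)) + p * Real.exp (z * (1-p)))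
      ((1-p) * ((-p) * Real.exp (l * (-p))) + p * ((1-p) * Real.exp (l * (1-p)))) l := by
  have h1 : HasDerivAt (fun z : ℝ => Real.exp (z * (-p))) ((-p) * Real.exp (l * (-p))) l := by
    simpa [mul_comm, Function.comp_def] using (Real.hasDerivAt_exp (l * (-p))).comp l ((hasDerivAt_id l).mul_const (-p))
  have h2 : HasDerivAt (fun z : ℝ => Real.exp (z * (1-p))) ((1-p) * Real.exp (l * (1-p))) l := by
    simpa [mul_comm, Function.comp_def] using
      (Real.hasDerivAt_exp (l * (1-p))).comp l ((hasDerivAt_id l).mul_const (1-p))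
  exact (h1.const_mul (1-p)).add (h2.const_mul p)

lemma hdB' (p : ℝ) (l : ℝ) :
    HasDerivAt (fun z : ℝ => 1 + p*(1-p) * (Real.exp z - 1 - z))
      (p*(1-p) * (Real.exp l - 1)) l := by
  have h2 : HasDerivAt (fun z : ℝ => Real.exp z - 1 - z) (Real.exp l - 1) l := by
    exact ((Real.hasDerivAt_exp l).sub_const 1).sub (hasDerivAt_id' l)
  simpa using (h2.const_mul (p*(1-p))).const_add 1

lemma AleB' {p : ℝ} (hp0 : 0 ≤ p) (hp1 : p ≤ 1) : ∀ l : ℝ, 0 ≤ l →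
    (1-p) * Real.exp (l * (-p)) + p * Real.exp (l * (1-p)) ≤
      1 + p*(1-p) * (Real.exp l - 1 - l) := by
  apply le_on_Ici'
  · exact fun l => (hdA' p l).differentiableAt
  · exact fun l => (hdB' p l).differentiableAt
  · simp
  · intro l hl
    rw [(hdA' p l).deriv, (hdB' p l).deriv]
    have key : Real.exp (l*(1-p)) - Real.exp (l*(-p)) ≤ Real.exp l - 1 := by
      have e1 : Real.exp (l*(1-p)) = Real.exp (l*(-p)) * Real.exp l := by
        rw [← Real.exp_add]; ring_nf
      have e2 : Real.exp (l*(-p)) ≤ 1 := by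
        rw [Real.exp_le_one_iff]
        nlinarith
      nlinarith [Real.exp_pos (l*(-p)), Real.one_le_exp hl.le]
    calc (1-p) * ((-p) * Real.exp (l * (-p))) + p * ((1-p) * Real.exp (l * (1-p)))
        = p*(1-p) * (Real.exp (l*(1-p)) - Real.exp (l*(-p))) := by ring
      _ ≤ p*(1-p) * (Real.exp l - 1) := by
          apply mul_le_mul_of_nonneg_left key (by nlinarith)

/-- Bernstein-type mgf bound for a Bernoulli distribution. -/
lemma bernoulli_mgf_bound {p l : ℝ} (hp0 : 0 ≤ p) (hp1 : p ≤ 1) (hl : 0 ≤ l) :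
    1 + p * (Real.exp l - 1) ≤ Real.exp (l * p + p*(1-p) * (Real.exp l - 1 - l)) := by
  have hA := AleB' hp0 hp1 l hl
  have h2 : 1 + p*(1-p) * (Real.exp l - 1 - l) ≤ Real.exp (p*(1-p) * (Real.exp l - 1 - l)) := by
    linarith [Real.add_one_le_exp (p*(1-p) * (Real.exp l - 1 - l))]
  have e1 : Real.exp (l * p) * ((1-p) * Real.exp (l * (-p)) + p * Real.exp (l * (1-p)))
      = 1 + p * (Real.exp l - 1) := by
    have a : Real.exp (l*p) * Real.exp (l*(-p)) = 1 := by
      rw [← Real.exp_add]; ring_nf; exact Real.exp_zero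
    have b : Real.exp (l*p) * Real.exp (l*(1-p)) = Real.exp l := by
      rw [← Real.exp_add]; ring_nf
    calc Real.exp (l * p) * ((1-p) * Real.exp (l * (-p)) + p * Real.exp (l * (1-p)))
        = (1-p) * (Real.exp (l*p) * Real.exp (l*(-p)))
            + p * (Real.exp (l*p) * Real.exp (l*(1-p))) := by ring
      _ = (1-p) * 1 + p * Real.exp l := by rw [a, b]
      _ = 1 + p * (Real.exp l - 1) := by ring
  calc 1 + p * (Real.exp l - 1)
      = Real.exp (l * p) * ((1-p) * Real.exp (l * (-p)) + p * Real.exp (l * (1-p))) := e1.symm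
    _ ≤ Real.exp (l * p) * (1 + p*(1-p) * (Real.exp l - 1 - l)) :=
        mul_le_mul_of_nonneg_left hA (Real.exp_pos _).le
    _ ≤ Real.exp (l * p) * Real.exp (p*(1-p) * (Real.exp l - 1 - l)) :=
        mul_le_mul_of_nonneg_left h2 (Real.exp_pos _).le
    _ = Real.exp (l * p + p*(1-p) * (Real.exp l - 1 - l)) := (Real.exp_add _ _).symm

lemma key_ineq {ε c a t : ℝ} (hε0 : 0 < ε) (hε1 : ε < 1) (hc : 0 < c) (ha0 : 0 ≤ a)
    (ht : t = (1-ε)⁻¹ * (a + (2/3 + 1/(2*ε))*c)) :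
    a*a + (8/3)*t*c ≤ t*t := by
  have h1e : 0 < 1 - ε := by linarith
  have heq : t*(1-ε) = a + (2/3 + 1/(2*ε))*c := by
    rw [ht]; field_simp
  have hcε : 0 < (2/3 + 1/(2*ε))*c := by positivity
  have ht0 : 0 < t := by rw [ht]; positivity
  have heq2 : t = a + (2/3)*c + c/(2*ε) + ε*t := by
    have : (2/3 + 1/(2*ε))*c = (2/3)*c + c/(2*ε) := by field_simp
    nlinarith [heq]
  have hta : a ≤ t := by
    nlinarith [mul_pos hε0 ht0, div_pos hc (by linarith : (0:ℝ) < 2*ε)]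
  have h2 : (2*ε/3 + 1/2)*c ≤ ε*t*(1-ε) := by
    have hid : ε * ((2/3 + 1/(2*ε))*c) = (2*ε/3 + 1/2)*c := by field_simp
    nlinarith [mul_le_mul_of_nonneg_left
      (le_add_of_nonneg_left ha0 : (2/3 + 1/(2*ε))*c ≤ a + (2/3 + 1/(2*ε))*c) hε0.le]
  have hstepA : 2*c ≤ ε*t + c/(2*ε) := by
    have hpos : 0 < 2*ε*(1-ε) := by positivity
    have h3 : 0 ≤ 2*ε*(1-ε) * (ε*t + c/(2*ε) - 2*c) := by
      have expand : 2*ε*(1-ε) * (ε*t + c/(2*ε) - 2*c) =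
          2*ε*(ε*t*(1-ε)) + (1-ε)*c - 4*ε*(1-ε)*c := by
        field_simp; ring
      rw [expand]
      nlinarith [sq_nonneg (ε - 3/8), mul_pos hε0 hc]
    nlinarith [(mul_nonneg_iff_of_pos_left hpos).mp h3]
  have heq3 : t*t = t*a + (2/3)*(t*c) + t*(c/(2*ε)) + ε*(t*t) := by
    calc t*t = (a + (2/3)*c + c/(2*ε) + ε*t)*t := by rw [← heq2]
      _ = t*a + (2/3)*(t*c) + t*(c/(2*ε)) + ε*(t*t) := by ring
  have hp1 : a*a ≤ t*a := mul_le_mul_of_nonneg_right hta ha0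
  have hp2 : t*(2*c) ≤ t*(ε*t + c/(2*ε)) := mul_le_mul_of_nonneg_left hstepA ht0.le
  nlinarith [heq3, hp1, hp2]

end Aux

section CdfPull

variable {Ω : Type*} [MeasurableSpace Ω]

/-- For a continuous CDF `G` of `X`, `P(G(X) < s) ≤ s`. -/
lemma cdf_pull (μ : Measure Ω) [IsProbabilityMeasure μ]
    (X : Ω → ℝ) (hX : Measurable X) (G : ℝ → ℝ)
    (hG : ∀ t, G t = (μ {ω | X ω ≤ t}).toReal)
    (hcont : Continuous G) {s : ℝ} (hs0 : 0 < s) (hs1 : s < 1) :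
    (μ {ω | G (X ω) < s}).toReal ≤ s := by
  have hGmono : Monotone G := by
    intro a b hab
    rw [hG a, hG b]
    exact ENNReal.toReal_mono (measure_ne_top μ _)
      (measure_mono (fun ω (h : X ω ≤ a) => h.trans hab))
  have hGIic : ∀ t : ℝ, G t = (μ (X ⁻¹' Set.Iic t)).toReal := by
    intro t; rw [hG t]; rfl
  have hTneg : Filter.Tendsto (fun k : ℕ => G (-(k:ℝ))) Filter.atTop (nhds 0) := by
    have hanti : Antitone (fun k : ℕ => X ⁻¹' Set.Iic (-(k:ℝ))) := by
      intro a b hab ω h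
      simp only [Set.mem_preimage, Set.mem_Iic] at *
      exact h.trans (by simpa using (Nat.cast_le (α := ℝ)).mpr hab)
    have hint : (⋂ k : ℕ, X ⁻¹' Set.Iic (-(k:ℝ))) = ∅ := by
      ext ω
      simp only [Set.mem_iInter, Set.mem_preimage, Set.mem_Iic, Set.mem_empty_iff_false,
        iff_false, not_forall]
      obtain ⟨k, hk⟩ := exists_nat_gt (-(X ω))
      exact ⟨k, by push_neg; linarith⟩
    have h0 := tendsto_measure_iInter_atTop (μ := μ)
      (fun k => (hX measurableSet_Iic).nullMeasurableSet) hanti ⟨0, measure_ne_top μ _⟩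
    rw [hint] at h0
    simp only [measure_empty] at h0
    have h2 := (ENNReal.tendsto_toReal ENNReal.zero_ne_top).comp h0
    simpa [Function.comp_def, hGIic] using h2
  have hTpos : Filter.Tendsto (fun k : ℕ => G (k:ℝ)) Filter.atTop (nhds 1) := by
    have hmono : Monotone (fun k : ℕ => X ⁻¹' Set.Iic (k:ℝ)) := by
      intro a b hab ω h
      simp only [Set.mem_preimage, Set.mem_Iic] at *
      exact h.trans (Nat.cast_le.mpr hab)
    have h0 := tendsto_measure_iUnion_atTop (μ := μ) hmono
    have hun : (⋃ k : ℕ, X ⁻¹' Set.Iic (k:ℝ)) = Set.univ := by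
      ext ω
      simp only [Set.mem_iUnion, Set.mem_preimage, Set.mem_Iic, Set.mem_univ, iff_true]
      obtain ⟨k, hk⟩ := exists_nat_gt (X ω)
      exact ⟨k, hk.le⟩
    rw [hun, measure_univ] at h0
    have h2 := (ENNReal.tendsto_toReal ENNReal.one_ne_top).comp h0
    simpa [Function.comp_def, hGIic] using h2
  set A : Set ℝ := {t | G t < s} with hA
  have hAne : A.Nonempty := by
    have hev := hTneg.eventually_lt_const hs0
    obtain ⟨k, hk⟩ := hev.exists
    exact ⟨-(k:ℝ), hk⟩
  have hAbdd : BddAbove A := by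
    have hev := (hTpos.eventually_const_lt hs1)
    obtain ⟨k, hk⟩ := hev.exists
    refine ⟨(k:ℝ), fun a ha => ?_⟩
    by_contra hlt
    push_neg at hlt
    exact absurd (hGmono hlt.le) (by simp only [hA, Set.mem_setOf_eq] at ha; linarith)
  set τ := sSup A with hτ
  have hGτ : G τ ≤ s := by
    have hseq : Filter.Tendsto (fun k : ℕ => τ - 1/((k:ℝ)+1)) Filter.atTop (nhds τ) := by
      have : Filter.Tendsto (fun k : ℕ => 1/((k:ℝ)+1)) Filter.atTop (nhds 0) :=
        tendsto_one_div_add_atTop_nhds_zero_nat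
      simpa using (tendsto_const_nhds (x := τ)).sub this
    have hlim : Filter.Tendsto (fun k : ℕ => G (τ - 1/((k:ℝ)+1))) Filter.atTop (nhds (G τ)) :=
      (hcont.continuousAt.tendsto).comp hseq
    refine le_of_tendsto hlim (Filter.Eventually.of_forall (fun k => ?_))
    have hlt : τ - 1/((k:ℝ)+1) < τ := by
      have : (0:ℝ) < 1/((k:ℝ)+1) := by positivity
      linarith
    obtain ⟨a, haA, hlta⟩ := exists_lt_of_lt_csSup hAne hlt
    exact ((hGmono hlta.le).trans_lt haA).le
  have hsub : {ω | G (X ω) < s} ⊆ {ω | X ω ≤ τ} := by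
    intro ω hω
    exact le_csSup hAbdd hω
  calc (μ {ω | G (X ω) < s}).toReal
      ≤ (μ {ω | X ω ≤ τ}).toReal :=
        ENNReal.toReal_mono (measure_ne_top μ _) (measure_mono hsub)
    _ = G τ := (hG τ).symm
    _ ≤ s := hGτ

end CdfPull

section Deterministic

lemma count_Q {n : ℕ} (hn : 0 < n) (y : Fin n → ℝ) {γ : ℝ} (hγ0 : 0 < γ) (hγ1 : γ ≤ 1) :
    γ * n ≤ ((Finset.univ.filter (fun i => y i ≤ Qminus γ (ecdf y))).card : ℝ) := by
  have hne : (Finset.univ : Finset (Fin n)).Nonempty := by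
    simpa [Finset.univ_nonempty_iff] using Fin.pos_iff_nonempty.mp hn
  have hnR : (0:ℝ) < n := Nat.cast_pos.mpr hn
  set T := {q : ℝ | γ ≤ ecdf y q} with hT
  have hTne : T.Nonempty := by
    refine ⟨Finset.univ.sup' hne y, ?_⟩
    have hfil : Finset.univ.filter (fun i => y i ≤ Finset.univ.sup' hne y) = Finset.univ :=
      Finset.filter_true_of_mem (fun i _ => Finset.le_sup' y (Finset.mem_univ i))
    simp only [hT, Set.mem_setOf_eq, ecdf, hfil, Finset.card_univ, Fintype.card_fin]
    rw [div_self hnR.ne']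
    exact hγ1
  have hTbdd : BddBelow T := by
    refine ⟨Finset.univ.inf' hne y, fun q hq => ?_⟩
    simp only [hT, Set.mem_setOf_eq, ecdf] at hq
    have hcard : 0 < ((Finset.univ.filter (fun i => y i ≤ q)).card : ℝ) := by
      by_contra h
      push_neg at h
      have : ((Finset.univ.filter (fun i => y i ≤ q)).card : ℝ) / n ≤ 0 :=
        div_nonpos_of_nonpos_of_nonneg h hnR.le
      linarith
    have : (Finset.univ.filter (fun i => y i ≤ q)).Nonempty := by
      rw [← Finset.card_pos]
      exact_mod_cast hcard
    obtain ⟨i, hi⟩ := this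
    have hyi : y i ≤ q := (Finset.mem_filter.mp hi).2
    exact le_trans (Finset.inf'_le y (Finset.mem_univ i)) hyi
  set Q := Qminus γ (ecdf y) with hQdef
  have hQT : γ ≤ ecdf y Q := by
    by_cases hall : ∀ i, y i ≤ Q
    · have hfil : Finset.univ.filter (fun i => y i ≤ Q) = Finset.univ :=
        Finset.filter_true_of_mem (fun i _ => hall i)
      simp only [ecdf, hfil, Finset.card_univ, Fintype.card_fin]
      rw [div_self hnR.ne']
      exact hγ1
    · push_neg at hall
      set A := Finset.univ.filter (fun i => Q < y i) with hAdef
      have hAne : A.Nonempty := by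
        obtain ⟨i, hi⟩ := hall
        exact ⟨i, Finset.mem_filter.mpr ⟨Finset.mem_univ i, hi⟩⟩
      set ε := (A.image (fun i => y i - Q)).min' (hAne.image _) with hε
      have hεpos : 0 < ε := by
        obtain ⟨j, hj, hje⟩ :=
          Finset.mem_image.mp ((A.image (fun i => y i - Q)).min'_mem (hAne.image _))
        have := (Finset.mem_filter.mp hj).2
        rw [hε, ← hje]
        linarith
      have hQeq : Q = sInf T := rfl
      have hQlt : sInf T < Q + ε := by rw [← hQeq]; linarith
      obtain ⟨q, hqT, hqlt⟩ := (csInf_lt_iff hTbdd hTne).mp hQlt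
      have hsub : Finset.univ.filter (fun i => y i ≤ q) ⊆
          Finset.univ.filter (fun i => y i ≤ Q) := by
        intro i hi
        have hyi : y i ≤ q := (Finset.mem_filter.mp hi).2
        refine Finset.mem_filter.mpr ⟨Finset.mem_univ i, ?_⟩
        by_contra h
        push_neg at h
        have hiA : i ∈ A := Finset.mem_filter.mpr ⟨Finset.mem_univ i, h⟩
        have : ε ≤ y i - Q := Finset.min'_le _ _ (Finset.mem_image_of_mem _ hiA)
        linarith
      have hmono : ((Finset.univ.filter (fun i => y i ≤ q)).card : ℝ) ≤
          ((Finset.univ.filter (fun i => y i ≤ Q)).card : ℝ) := by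
        exact_mod_cast Finset.card_le_card hsub
      simp only [hT, Set.mem_setOf_eq, ecdf] at hqT
      simp only [ecdf]
      calc γ ≤ ((Finset.univ.filter (fun i => y i ≤ q)).card : ℝ) / n := hqT
        _ ≤ ((Finset.univ.filter (fun i => y i ≤ Q)).card : ℝ) / n := by gcongr
  have hfin : γ ≤ ((Finset.univ.filter (fun i => y i ≤ Q)).card : ℝ) / n := hQT
  calc γ * n ≤ (((Finset.univ.filter (fun i => y i ≤ Q)).card : ℝ) / n) * n :=
        mul_le_mul_of_nonneg_right hfin hnR.le
    _ = ((Finset.univ.filter (fun i => y i ≤ Q)).card : ℝ) := by field_simp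

lemma det_main {n : ℕ} (hn : 0 < n) (y : Fin n → ℝ) (F : Fin n → ℝ → ℝ)
    (hFmono : ∀ i, Monotone (F i)) (nn : Fin n) (φ : ℝ)
    (hφ : ∀ i t, |F i t - F nn t| ≤ φ)
    {γ s : ℝ} (hγ0 : 0 < γ) (hγ1 : γ ≤ 1)
    (hcount : ((Finset.univ.filter (fun i => F i (y i) < s)).card : ℝ) < γ * n) :
    γ - F nn (Qminus γ (ecdf y)) ≤ φ + (γ - s) := by
  set Q := Qminus γ (ecdf y) with hQ
  have h1 := count_Q hn y hγ0 hγ1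
  rw [← hQ] at h1
  have hcard : (Finset.univ.filter (fun i => F i (y i) < s)).card <
      (Finset.univ.filter (fun i => y i ≤ Q)).card := by
    exact_mod_cast lt_of_lt_of_le hcount h1
  have hex : ∃ i, y i ≤ Q ∧ ¬ F i (y i) < s := by
    by_contra h
    push_neg at h
    have hsub : Finset.univ.filter (fun i => y i ≤ Q) ⊆
        Finset.univ.filter (fun i => F i (y i) < s) := by
      intro i hi
      exact Finset.mem_filter.mpr ⟨Finset.mem_univ i, h i (Finset.mem_filter.mp hi).2⟩
    exact absurd (Finset.card_le_card hsub) (not_le.mpr hcard)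
  obtain ⟨i, hyQ, hFs⟩ := hex
  push_neg at hFs
  have h2 : F i (y i) ≤ F i Q := hFmono i hyQ
  have h3 : F i Q - F nn Q ≤ φ := le_trans (le_abs_self _) (hφ i Q)
  linarith

end Deterministic

section Chernoff

open Real

variable {Ω : Type*} [MeasurableSpace Ω]

lemma chernoff_bad (μ : Measure Ω) [IsProbabilityMeasure μ] {n : ℕ}
    (X : Fin n → Ω → ℝ) (hX : ∀ i, Measurable (X i))
    (hind : iIndepFun X μ)
    (hval : ∀ i ω, X i ω = 0 ∨ X i ω = 1)
    {p l : ℝ} (hp0 : 0 ≤ p) (hp1 : p ≤ 1) (hl : 0 ≤ l)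
    (hpi : ∀ i, (∫ ω, X i ω ∂μ) ≤ p) (c : ℝ) :
    (μ {ω | c ≤ ∑ i, X i ω}).toReal ≤
      Real.exp (-(l*c) + n*(l*p + p*(1-p) * (Real.exp l - 1 - l))) := by
  have hXnonneg : ∀ i ω, 0 ≤ X i ω := by
    intro i ω; rcases hval i ω with h | h <;> rw [h] <;> norm_num
  have hXle : ∀ i ω, X i ω ≤ 1 := by
    intro i ω; rcases hval i ω with h | h <;> rw [h] <;> norm_num
  have hXint : ∀ i, Integrable (X i) μ := by
    intro i
    refine ⟨(hX i).aestronglyMeasurable, ?_⟩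
    apply HasFiniteIntegral.of_bounded (C := 1)
    filter_upwards with ω
    rw [Real.norm_eq_abs, abs_le]
    exact ⟨by linarith [hXnonneg i ω], hXle i ω⟩
  have hexp_eq : ∀ i, (fun ω => Real.exp (l * X i ω)) =
      (fun ω => 1 + (Real.exp l - 1) * X i ω) := by
    intro i
    funext ω
    rcases hval i ω with h | h <;> rw [h] <;> simp
  have hint : ∀ i, Integrable (fun ω => Real.exp (l * X i ω)) μ := by
    intro i
    rw [hexp_eq i]
    exact (integrable_const 1).add ((hXint i).const_mul _)
  have hmgf : ∀ i, mgf (X i) μ l ≤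
      Real.exp (l*p + p*(1-p) * (Real.exp l - 1 - l)) := by
    intro i
    have hmeq : mgf (X i) μ l = 1 + (Real.exp l - 1) * (∫ ω, X i ω ∂μ) := by
      rw [mgf, hexp_eq i]
      rw [integral_add (integrable_const 1) ((hXint i).const_mul _)]
      simp [MeasureTheory.integral_const_mul]
    rw [hmeq]
    have h1 : (Real.exp l - 1) * (∫ ω, X i ω ∂μ) ≤ (Real.exp l - 1) * p :=
      mul_le_mul_of_nonneg_left (hpi i) (by linarith [Real.one_le_exp hl])
    calc 1 + (Real.exp l - 1) * (∫ ω, X i ω ∂μ) ≤ 1 + p * (Real.exp l - 1) := by linarith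
      _ ≤ _ := bernoulli_mgf_bound hp0 hp1 hl
  have hSint : Integrable (fun ω => Real.exp (l * (∑ i, X i) ω)) μ :=
    hind.integrable_exp_mul_sum hX (fun i _ => hint i)
  have hcher := measure_ge_le_exp_mul_mgf (μ := μ) (X := ∑ i, X i) c hl hSint
  have hmgfsum : mgf (∑ i, X i) μ l = ∏ i, mgf (X i) μ l := hind.mgf_sum hX Finset.univ
  have hset : {ω | c ≤ (∑ i, X i) ω} = {ω | c ≤ ∑ i, X i ω} := by
    ext ω; simp [Finset.sum_apply]
  rw [hset, hmgfsum] at hcher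
  calc (μ {ω | c ≤ ∑ i, X i ω}).toReal
      ≤ Real.exp (-l * c) * ∏ i, mgf (X i) μ l := hcher
    _ ≤ Real.exp (-l * c) *
        ∏ _i : Fin n, Real.exp (l*p + p*(1-p) * (Real.exp l - 1 - l)) := by
        apply mul_le_mul_of_nonneg_left _ (Real.exp_pos _).le
        exact Finset.prod_le_prod (fun i _ => mgf_nonneg) (fun i _ => hmgf i)
    _ = Real.exp (-(l*c) + n*(l*p + p*(1-p) * (Real.exp l - 1 - l))) := by
        rw [Finset.prod_const, Finset.card_univ, Fintype.card_fin, ← Real.exp_nat_mul,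
          ← Real.exp_add]
        ring_nf

end Chernoff

set_option maxHeartbeats 1000000 in
/-- Concentration of the empirical quantile under distribution shift (left quantile):
for independent samples `x i` with continuous CDFs `F i` and
`φ = max_i ‖F i - F (n-1)‖_∞`, with probability at least `1 - δ`,
`γ - Fₙ(Q⁻_γ(F̂)) ≤ φ + (1-ε)⁻¹ [√(2γ(1-γ)log(1/δ)/n) + (2/3 + 1/(2ε))·log(1/δ)/n]`. -/
theorem stmt11 {Ω : Type*} [MeasurableSpace Ω] (μ : Measure Ω) [IsProbabilityMeasure μ]
    {n : ℕ} (hn : 0 < n) (x : Fin n → Ω → ℝ)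
    (hmeas : ∀ i, Measurable (x i))
    (hind : iIndepFun x μ)
    (F : Fin n → ℝ → ℝ)
    (hF : ∀ i t, F i t = (μ {ω | x i ω ≤ t}).toReal)
    (hcont : ∀ i, Continuous (F i))
    (φ : ℝ)
    (hφ : φ = ⨆ i : Fin n, ⨆ t : ℝ, |F i t - F ⟨n - 1, Nat.sub_lt hn Nat.one_pos⟩ t|)
    (γ δ ε : ℝ) (hγ : γ ∈ Set.Ioo (0 : ℝ) 1) (hδ : δ ∈ Set.Ioo (0 : ℝ) 1)
    (hε : ε ∈ Set.Ioo (0 : ℝ) 1) :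
    1 - δ ≤ (μ {ω | γ - F ⟨n - 1, Nat.sub_lt hn Nat.one_pos⟩
        (Qminus γ (ecdf (fun i => x i ω))) ≤
        φ + (1 - ε)⁻¹ * (Real.sqrt (2 * γ * (1 - γ) * Real.log (1 / δ) / n) +
          (2 / 3 + 1 / (2 * ε)) * Real.log (1 / δ) / n)}).toReal := by
  obtain ⟨hγ0, hγ1⟩ := hγ
  obtain ⟨hδ0, hδ1⟩ := hδ
  obtain ⟨hε0, hε1⟩ := hε
  set nn : Fin n := ⟨n - 1, Nat.sub_lt hn Nat.one_pos⟩ with hnn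
  have hnR : (0:ℝ) < n := Nat.cast_pos.mpr hn
  have h1e : (0:ℝ) < 1 - ε := by linarith
  set L := Real.log (1/δ) with hL
  have hL0 : 0 < L := Real.log_pos (by rw [lt_div_iff₀ hδ0]; linarith)
  set c := L / n with hc
  have hc0 : 0 < c := div_pos hL0 hnR
  set a := Real.sqrt (2*γ*(1-γ)*L/n) with ha
  have ha0 : 0 ≤ a := Real.sqrt_nonneg _
  have harg : (0:ℝ) ≤ 2*γ*(1-γ)*L/n := by
    apply div_nonneg _ hnR.le
    have h1g : (0:ℝ) < 1 - γ := by linarith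
    nlinarith [mul_pos (mul_pos hγ0 h1g) hL0]
  have ha2 : a*a = 2*γ*(1-γ)*c := by
    rw [ha, Real.mul_self_sqrt harg, hc]; ring
  set t := (1-ε)⁻¹ * (a + (2/3 + 1/(2*ε))*c) with ht
  have ht0 : 0 < t := by
    apply mul_pos (inv_pos.mpr h1e)
    have : 0 < (2/3 + 1/(2*ε))*c := by positivity
    linarith
  set s := γ - t with hs
  -- basic facts about F
  have hF01 : ∀ i r, 0 ≤ F i r ∧ F i r ≤ 1 := by
    intro i r
    rw [hF]
    refine ⟨ENNReal.toReal_nonneg, ?_⟩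
    calc (μ {ω | x i ω ≤ r}).toReal ≤ (μ Set.univ).toReal :=
          ENNReal.toReal_mono (measure_ne_top μ _) (measure_mono (Set.subset_univ _))
      _ = 1 := by simp
  have hFmono : ∀ i, Monotone (F i) := by
    intro i u v huv
    rw [hF, hF]
    exact ENNReal.toReal_mono (measure_ne_top μ _)
      (measure_mono (fun ω (h : x i ω ≤ u) => h.trans huv))
  have hφb : ∀ i r, |F i r - F nn r| ≤ φ := by
    intro i r
    have habs : ∀ j u, |F j u - F nn u| ≤ 1 := by
      intro j u
      rw [abs_le]
      constructor
      · linarith [(hF01 j u).1, (hF01 nn u).2]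
      · linarith [(hF01 j u).2, (hF01 nn u).1]
    have hbdd : ∀ j, BddAbove (Set.range fun u => |F j u - F nn u|) := by
      intro j
      refine ⟨1, ?_⟩
      rintro _ ⟨u, rfl⟩
      exact habs j u
    have h1 : |F i r - F nn r| ≤ ⨆ u, |F i u - F nn u| := le_ciSup (hbdd i) r
    have h2 : (⨆ u, |F i u - F nn u|) ≤ ⨆ j, ⨆ u, |F j u - F nn u| :=
      le_ciSup (f := fun j => ⨆ u, |F j u - F nn u|)
        (Set.Finite.bddAbove (Set.finite_range _)) i
    rw [hφ]
    exact h1.trans h2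
  -- indicator variables
  set X : Fin n → Ω → ℝ := fun i ω => if F i (x i ω) < s then 1 else 0 with hX
  have hXmeas : ∀ i, Measurable (X i) := by
    intro i
    exact Measurable.ite
      (measurableSet_lt ((hcont i).measurable.comp (hmeas i)) measurable_const)
      measurable_const measurable_const
  have hval : ∀ i ω, X i ω = 0 ∨ X i ω = 1 := by
    intro i ω
    by_cases h : F i (x i ω) < s
    · right; simp [hX, h]
    · left; simp [hX, h]
  have hindX : iIndepFun X μ := by
    have hg : ∀ i, Measurable (fun r : ℝ => if F i r < s then (1:ℝ) else 0) := by
      intro i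
      exact Measurable.ite (measurableSet_lt (hcont i).measurable measurable_const)
        measurable_const measurable_const
    exact hind.comp (fun i (r : ℝ) => if F i r < s then (1:ℝ) else 0) hg
  set bad := {ω | γ * n ≤ ∑ i, X i ω} with hbad
  have hbadmeas : MeasurableSet bad :=
    measurableSet_le measurable_const (Finset.measurable_sum _ (fun i _ => hXmeas i))
  have hsum_count : ∀ ω, (∑ i, X i ω) =
      ((Finset.univ.filter (fun i => F i (x i ω) < s)).card : ℝ) := by
    intro ω
    simp only [hX]
    exact Finset.sum_boole _ _
  -- probability of the bad event
  have hbadle : (μ bad).toReal ≤ δ := by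
    by_cases hspos : 0 < s
    · have hs1 : s < 1 := by rw [hs]; linarith
      have hpi : ∀ i, (∫ ω, X i ω ∂μ) ≤ s := by
        intro i
        have hAmeas : MeasurableSet {ω | F i (x i ω) < s} :=
          measurableSet_lt ((hcont i).measurable.comp (hmeas i)) measurable_const
        have hXind : X i = Set.indicator {ω | F i (x i ω) < s} (fun _ => (1:ℝ)) := by
          funext ω
          by_cases h : F i (x i ω) < s
          · simp [hX, h, Set.indicator_apply, Set.mem_setOf_eq]
          · simp [hX, h, Set.indicator_apply, Set.mem_setOf_eq]
        have heq : (∫ ω, X i ω ∂μ) = (μ {ω | F i (x i ω) < s}).toReal := by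
          rw [hXind, MeasureTheory.integral_indicator_const (1:ℝ) hAmeas]
          simp [Measure.real]
        rw [heq]
        exact cdf_pull μ (x i) (hmeas i) (F i) (hF i) (hcont i) hspos hs1
      set σ2 := s*(1-s) with hσ
      have hσ0 : 0 < σ2 := mul_pos hspos (by linarith)
      have hld : 0 < σ2 + t/3 := by positivity
      set l := t/(σ2 + t/3) with hl
      have hl0 : 0 < l := div_pos ht0 hld
      have hcher := chernoff_bad μ X hXmeas hindX hval hspos.le (by linarith : s ≤ 1)
        hl0.le hpi (γ * n)
      have hlt : l * (σ2 + t/3) = t := by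
        rw [hl]; field_simp
      have hE : σ2 * (Real.exp l - 1 - l) ≤ l*t/2 := by
        have h1 := exp_taylor_bound l hl0.le
        have h2 : (1 - l/3) = σ2 / (σ2 + t/3) := by
          rw [hl]; field_simp; ring
        have h4 : σ2 * (Real.exp l - 1 - l) =
            (σ2 + t/3) * ((1 - l/3)*(Real.exp l - 1 - l)) := by
          rw [h2]; field_simp
        calc σ2 * (Real.exp l - 1 - l)
            = (σ2 + t/3) * ((1 - l/3)*(Real.exp l - 1 - l)) := h4
          _ ≤ (σ2 + t/3) * (l^2/2) := mul_le_mul_of_nonneg_left h1 hld.le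
          _ = (l * (σ2 + t/3)) * l / 2 := by ring
          _ = l*t/2 := by rw [hlt]; ring
      have hlt2 : 2*c ≤ l*t := by
        have hkey := key_ineq hε0 hε1 hc0 ha0 ht
        have hσle : σ2 ≤ γ*(1-γ) + t := by
          rw [hσ, hs]; nlinarith
        have h5 : 2*c*(σ2 + t/3) ≤ t*t := by
          nlinarith [mul_le_mul_of_nonneg_left hσle (by positivity : (0:ℝ) ≤ 2*c), hkey, ha2]
        have hlteq : l*t = t*t/(σ2 + t/3) := by rw [hl]; ring
        rw [hlteq, le_div_iff₀ hld]
        linarith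
      have hexpineq : -(l*(γ*n)) + n*(l*s + σ2*(Real.exp l - 1 - l)) ≤ -L := by
        have hid : -(l*(γ*n)) + n*(l*s + σ2*(Real.exp l - 1 - l)) =
            -((n:ℝ)*(l*t - σ2*(Real.exp l - 1 - l))) := by
          rw [hs]; ring
        rw [hid]
        have hcle : c ≤ l*t - σ2*(Real.exp l - 1 - l) := by linarith
        have hnc : (n:ℝ) * c = L := by rw [hc]; field_simp
        have := mul_le_mul_of_nonneg_left hcle hnR.le
        rw [hnc] at this
        linarith
      calc (μ bad).toReal
          ≤ Real.exp (-(l*(γ*n)) + n*(l*s + σ2*(Real.exp l - 1 - l))) := hcher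
        _ ≤ Real.exp (-L) := Real.exp_le_exp.mpr hexpineq
        _ = δ := by
            rw [hL, one_div, Real.log_inv, neg_neg, Real.exp_log hδ0]
    · push_neg at hspos
      have hbadempty : bad = ∅ := by
        rw [hbad]
        ext ω
        simp only [Set.mem_setOf_eq, Set.mem_empty_iff_false, iff_false, not_le]
        have hzero : ∀ i, X i ω = 0 := by
          intro i
          have : ¬ F i (x i ω) < s := by
            push_neg
            exact hspos.trans (hF01 i (x i ω)).1
          simp [hX, this]
        have hsz : (∑ i, X i ω) = 0 := Finset.sum_eq_zero (fun i _ => hzero i)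
        rw [hsz]
        positivity
      rw [hbadempty]
      simp
      linarith
  -- inclusion of the complement of bad in the good event
  have hincl : badᶜ ⊆ {ω | γ - F nn (Qminus γ (ecdf (fun i => x i ω))) ≤
      φ + (1 - ε)⁻¹ * (a + (2 / 3 + 1 / (2 * ε)) * L / n)} := by
    intro ω hω
    simp only [hbad, Set.mem_compl_iff, Set.mem_setOf_eq, not_le] at hω
    rw [hsum_count ω] at hω
    have hdet := det_main hn (fun i => x i ω) F hFmono nn φ hφb hγ0 hγ1.le hω
    have hts : γ - s = t := by rw [hs]; ring
    have hteq : φ + t = φ + (1 - ε)⁻¹ * (a + (2 / 3 + 1 / (2 * ε)) * L / n) := by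
      rw [ht, hc]; ring
    simp only [Set.mem_setOf_eq]
    rw [hts] at hdet
    linarith
  -- conclude
  have hcompl : (1:ℝ) - δ ≤ (μ badᶜ).toReal := by
    rw [prob_compl_eq_one_sub hbadmeas,
      ENNReal.toReal_sub_of_le prob_le_one ENNReal.one_ne_top, ENNReal.toReal_one]
    linarith
  calc (1:ℝ) - δ ≤ (μ badᶜ).toReal := hcompl
    _ ≤ _ := ENNReal.toReal_mono (measure_ne_top μ _) (measure_mono hincl)
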